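/- Let D ≥ 1 and let Q, Q^e : ℕ → ℝ≥0, F_in, F_out : ℕ → ℝ≥0 satisfy for all t ≥ D: Q(t+1) = max(0, Q(t) + F_in(t) − F_out(t)), Q^e(t−D+1) = Q^e(t−D) + F_in(t) − F_out(t) with Q^e ≥ 0, and initially Q(D) = Q^e(0) + G where G := ∑_{τ=0}^{D−1}(F̃_in(τ) − F̃_out(τ)) ≥ 0 is the net inflow during the first D slots. If t₁ ≥ D is the first time t ≥ D at which F_out(t) ≥ Q(t) + F_in(t) (so the queue empties at t₁+1), then Q(t) = Q^e(t−D) + G for all D ≤ t ≤ t₁, and Q(t) ≤ Q^e(t−D) for all t > t₁. -/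
import Mathlib


open Finset

/-- Receiver queues under UT with arbitrary initial actions: until the first
emptying time the real queue exceeds the emulated queue by exactly the net
inflow `G` of the first `D` slots, and after the emptying time the real queue
is dominated by the emulated queue. -/
theorem stmt10 (D : ℕ) (hD : 1 ≤ D) (Q Qe Fin' Fout Ftin Ftout : ℕ → ℝ)
    (hQnonneg : ∀ t, 0 ≤ Q t) (hQenonneg : ∀ t, 0 ≤ Qe t)
    (hFin : ∀ t, 0 ≤ Fin' t) (hFout : ∀ t, 0 ≤ Fout t)
    (hQ : ∀ t, D ≤ t → Q (t + 1) = max 0 (Q t + Fin' t - Fout t))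
    (hQe : ∀ t, D ≤ t → Qe (t - D + 1) = Qe (t - D) + Fin' t - Fout t)
    (G : ℝ) (hG : G = ∑ τ ∈ Finset.range D, (Ftin τ - Ftout τ)) (hGpos : 0 ≤ G)
    (hinit : Q D = Qe 0 + G)
    (t₁ : ℕ) (ht₁ : D ≤ t₁)
    (hfirst : Q t₁ + Fin' t₁ ≤ Fout t₁ ∧
      ∀ t, D ≤ t → t < t₁ → Fout t < Q t + Fin' t) :
    (∀ t, D ≤ t → t ≤ t₁ → Q t = Qe (t - D) + G) ∧
    (∀ t, t₁ < t → Q t ≤ Qe (t - D)) := by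
  obtain ⟨hemp, hpre⟩ := hfirst
  have part1 : ∀ t, D ≤ t → t ≤ t₁ → Q t = Qe (t - D) + G := by
    intro t hDt
    induction t, hDt using Nat.le_induction with
    | base => intro _; simpa using hinit
    | succ t ht ih =>
      intro hle
      have hlt : t < t₁ := hle
      have hih := ih (le_of_lt hlt)
      have hpos : Fout t < Q t + Fin' t := hpre t ht hlt
      have hmax : Q (t + 1) = Q t + Fin' t - Fout t := by
        rw [hQ t ht]; exact max_eq_right (by linarith)
      have hsub : t + 1 - D = t - D + 1 := by omega
      rw [hmax, hih, hsub, hQe t ht]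
      ring
  refine ⟨part1, ?_⟩
  intro t ht
  induction t, ht using Nat.le_induction with
  | base =>
    have hmax : Q (t₁ + 1) = 0 := by
      rw [hQ t₁ ht₁]; exact max_eq_left (by linarith)
    rw [hmax]; exact hQenonneg _
  | succ t ht ih =>
    have hDt : D ≤ t := le_trans ht₁ (le_of_lt ht)
    have hsub : t + 1 - D = t - D + 1 := by omega
    rw [hQ t hDt, hsub, hQe t hDt]
    have := hQenonneg (t - D + 1)
    rw [hQe t hDt] at this
    have h2 : Q t + Fin' t - Fout t ≤ Qe (t - D) + Fin' t - Fout t := by linarith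
    exact max_le (by linarith) h2
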